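/- Let Q be real with Q > 1 and let i denote the imaginary unit. Then the Case 2 one-variable braid generator σ is not diagonalizable over ℂ; that is, there is no basis of ℂ¹⁶ consisting of eigenvectors of σ (equivalently, σ is not similar to any diagonal matrix). -/

import Mathlib

open Matrix

noncomputable section

/-- The elementary matrix `E(a,b;c,d)` on `ℂ⁴ ⊗ ℂ⁴`. -/
def E (a b c d : Fin 4) : Matrix (Fin 4 × Fin 4) (Fin 4 × Fin 4) ℂ :=
  Matrix.single (a, b) (c, d) 1

/-- `M ⊗ I₄`, acting on the first two factors of `ℂ⁴ ⊗ ℂ⁴ ⊗ ℂ⁴`. -/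
def op12 (M : Matrix (Fin 4 × Fin 4) (Fin 4 × Fin 4) ℂ) :
    Matrix (Fin 4 × Fin 4 × Fin 4) (Fin 4 × Fin 4 × Fin 4) ℂ :=
  Matrix.of fun x y => M (x.1, x.2.1) (y.1, y.2.1) * (if x.2.2 = y.2.2 then 1 else 0)

/-- `I₄ ⊗ M`, acting on the last two factors of `ℂ⁴ ⊗ ℂ⁴ ⊗ ℂ⁴`. -/
def op23 (M : Matrix (Fin 4 × Fin 4) (Fin 4 × Fin 4) ℂ) :
    Matrix (Fin 4 × Fin 4 × Fin 4) (Fin 4 × Fin 4 × Fin 4) ℂ :=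
  Matrix.of fun x y => (if x.1 = y.1 then 1 else 0) * M (x.2.1, x.2.2) (y.2.1, y.2.2)

/-- The left quantum partial trace `T(C, M)_{a,b} = Σ_{c,d} C_{d,c} M_{(c,a),(d,b)}`. -/
def ptrace (C : Matrix (Fin 4) (Fin 4) ℂ) (M : Matrix (Fin 4 × Fin 4) (Fin 4 × Fin 4) ℂ) :
    Matrix (Fin 4) (Fin 4) ℂ :=
  Matrix.of fun a b => ∑ c : Fin 4, ∑ d : Fin 4, C d c * M (c, a) (d, b)

/-- The Case 2 one-variable braid generator `σ` (indices shifted from 1–4 to 0–3). -/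
def sigma2 (Q : ℝ) : Matrix (Fin 4 × Fin 4) (Fin 4 × Fin 4) ℂ :=
  ((Q : ℝ) : ℂ) • E 0 0 0 0
  - ((Q⁻¹ : ℝ) : ℂ) • (E 1 1 1 1 + E 2 2 2 2)
  + ((Q : ℝ) : ℂ) • E 3 3 3 3
  + ((Q - Q⁻¹ : ℝ) : ℂ) • (E 1 0 1 0 + E 3 2 3 2)
  + (E 0 1 1 0 + E 0 2 2 0 + E 1 0 0 1 + E 2 0 0 2)
  + (E 1 3 3 1 + E 2 3 3 2 + E 3 1 1 3 + E 3 2 2 3)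
  + ((Q⁻¹ : ℝ) : ℂ) • (E 0 3 3 0 + E 3 0 0 3)
  - ((Q : ℝ) : ℂ) • (E 1 2 2 1 + E 2 1 1 2)
  - (Complex.I * ((Q - Q⁻¹ : ℝ) : ℂ)) • (E 3 0 1 2 + E 1 2 3 0)

/-- Generalized eigenvector of `σ` at eigenvalue `1`. -/
def vvec (Q : ℝ) : Fin 4 × Fin 4 → ℂ := fun p =>
  if p = (0, 3) then -((Q : ℂ) ^ 2 - 1)
  else if p = (1, 2) then Complex.I * ((Q : ℂ) ^ 2 + 1)
  else if p = (2, 1) then -2 * Complex.I * (Q : ℂ)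
  else 0

/-- Eigenvector of `σ` at eigenvalue `1`. -/
def uvec (Q : ℝ) : Fin 4 × Fin 4 → ℂ := fun p =>
  if p = (0, 3) then (Q : ℂ) ^ 2 - 1
  else if p = (1, 2) then Complex.I * ((Q : ℂ) ^ 2 - 1)
  else if p = (2, 1) then -Complex.I * (Q : ℂ) * ((Q : ℂ) ^ 2 - 1)
  else if p = (3, 0) then (Q : ℂ) * ((Q : ℂ) ^ 2 - 1)
  else 0

set_option maxHeartbeats 1600000 in
lemma sigma_mulVec_v (Q : ℝ) (hQ : 1 < Q) :
    (sigma2 Q - 1) *ᵥ vvec Q = uvec Q := by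
  have h0 : (Q : ℂ) ≠ 0 := by
    exact_mod_cast ne_of_gt (lt_trans one_pos hQ)
  funext i
  obtain ⟨a, b⟩ := i
  fin_cases a <;> fin_cases b <;>
    simp only [Matrix.mulVec, dotProduct, Fintype.sum_prod_type, Fin.sum_univ_four,
      Matrix.sub_apply, Matrix.one_apply, sigma2, E, Matrix.single,
      Matrix.of_apply, Matrix.add_apply, Matrix.smul_apply, smul_eq_mul, vvec, uvec] <;>
    simp (config := { decide := true }) [Prod.ext_iff] <;>
    push_cast <;>
    (try field_simp) <;> (try ring_nf) <;> (try simp [Complex.I_sq]) <;>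
    (try ring_nf) <;> (try ring)

set_option maxHeartbeats 1600000 in
lemma sigma_mulVec_u (Q : ℝ) (hQ : 1 < Q) :
    (sigma2 Q - 1) *ᵥ uvec Q = 0 := by
  have h0 : (Q : ℂ) ≠ 0 := by
    exact_mod_cast ne_of_gt (lt_trans one_pos hQ)
  funext i
  obtain ⟨a, b⟩ := i
  fin_cases a <;> fin_cases b <;>
    simp only [Matrix.mulVec, dotProduct, Fintype.sum_prod_type, Fin.sum_univ_four,
      Matrix.sub_apply, Matrix.one_apply, sigma2, E, Matrix.single,
      Matrix.of_apply, Matrix.add_apply, Matrix.smul_apply, smul_eq_mul, uvec,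
      Pi.zero_apply] <;>
    simp (config := { decide := true }) [Prod.ext_iff] <;>
    push_cast <;>
    (try field_simp) <;> (try ring_nf) <;> (try simp [Complex.I_sq]) <;>
    (try ring_nf) <;> (try ring)

lemma uvec_ne_zero (Q : ℝ) (hQ : 1 < Q) : uvec Q ≠ 0 := by
  intro h
  have hQ0 : Q ≠ 0 := ne_of_gt (lt_trans one_pos hQ)
  have h2 : (Q : ℂ) ^ 2 - 1 ≠ 0 := by
    have hr : (Q : ℝ) ^ 2 - 1 ≠ 0 := by nlinarith
    intro hc
    apply hr
    have : ((Q ^ 2 - 1 : ℝ) : ℂ) = 0 := by push_cast; push_cast at hc; linear_combination hc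
    exact_mod_cast this
  have hcf := congrFun h (3, 0)
  simp [uvec] at hcf
  rcases hcf with h | h
  · exact hQ0 h
  · exact h2 h

/-- The Case 2 braid generator `σ` is not diagonalizable over `ℂ`: it is not similar to
any diagonal matrix. -/
theorem case2_not_diagonalizable (Q : ℝ) (hQ : 1 < Q) :
    ¬ ∃ (P : Matrix (Fin 4 × Fin 4) (Fin 4 × Fin 4) ℂ) (d : Fin 4 × Fin 4 → ℂ),
        IsUnit P ∧ sigma2 Q = P * Matrix.diagonal d * P⁻¹ := by
  rintro ⟨P, d, hP, heq⟩
  have hPdet : IsUnit P.det := (Matrix.isUnit_iff_isUnit_det P).mp hP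
  have hPinv : P * P⁻¹ = 1 := Matrix.mul_nonsing_inv P hPdet
  have hinvP : P⁻¹ * P = 1 := Matrix.nonsing_inv_mul P hPdet
  set D : Matrix (Fin 4 × Fin 4) (Fin 4 × Fin 4) ℂ :=
    Matrix.diagonal (fun i => d i - 1) with hD
  have hA : sigma2 Q - 1 = P * D * P⁻¹ := by
    have hdd : D = Matrix.diagonal d - 1 := by
      rw [hD, ← Matrix.diagonal_one, Matrix.diagonal_sub]
    rw [hdd, heq, Matrix.mul_sub, Matrix.sub_mul, Matrix.mul_one, hPinv]
  have cancel : ∀ w : Fin 4 × Fin 4 → ℂ, P⁻¹ *ᵥ (P *ᵥ w) = w := by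
    intro w; rw [Matrix.mulVec_mulVec, hinvP, Matrix.one_mulVec]
  set x : Fin 4 × Fin 4 → ℂ := P⁻¹ *ᵥ vvec Q with hx
  have hu : uvec Q = P *ᵥ (D *ᵥ x) := by
    rw [← sigma_mulVec_v Q hQ, hA, ← Matrix.mulVec_mulVec, ← Matrix.mulVec_mulVec]
  -- second application kills it
  have hz : P *ᵥ (D *ᵥ (D *ᵥ x)) = 0 := by
    have h1 : (sigma2 Q - 1) *ᵥ uvec Q = 0 := sigma_mulVec_u Q hQ
    rw [hu, hA, ← Matrix.mulVec_mulVec, ← Matrix.mulVec_mulVec, cancel] at h1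
    exact h1
  have hDDx : D *ᵥ (D *ᵥ x) = 0 := by
    have h := congrArg (fun w => P⁻¹ *ᵥ w) hz
    rw [cancel, Matrix.mulVec_zero] at h
    exact h
  have hDx : D *ᵥ x = 0 := by
    funext i
    have hz2 := congrFun hDDx i
    simp only [hD, Matrix.mulVec_diagonal, Pi.zero_apply] at hz2 ⊢
    have hsq : ((d i - 1) * x i) ^ 2 = 0 := by linear_combination x i * hz2
    exact pow_eq_zero_iff (n := 2) (by norm_num) |>.mp hsq
  have : uvec Q = 0 := by rw [hu, hDx, Matrix.mulVec_zero]
  exact uvec_ne_zero Q hQ this
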